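/- Let P be a Polish space and let X ⊆ P be an analytic set such that the subspace X is a Baire space. Then there exists a set G ⊆ X that is dense in the subspace X and is a Gδ subset of P (hence G is completely metrizable in the subspace topology). -/

import Mathlib

open Set Filter Topology TopologicalSpace MeasureTheory PiNat

set_option linter.unusedSectionVars false
set_option linter.unusedVariables false

section Hulls
variable {α : Type*} [TopologicalSpace α]

lemma my_isMeagre_iUnion {ι : Sort*} [Countable ι] {s : ι → Set α} (hs : ∀ i, IsMeagre (s i)) :
    IsMeagre (⋃ i, s i) := by
  rw [IsMeagre, compl_iUnion]
  exact countable_iInter_mem.mpr hs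

lemma my_isMeagre_biUnion {ι : Type*} {T : Set ι} (hT : T.Countable) {s : ι → Set α}
    (hs : ∀ i ∈ T, IsMeagre (s i)) : IsMeagre (⋃ i ∈ T, s i) := by
  rw [IsMeagre, compl_iUnion]
  simp_rw [compl_iUnion]
  exact (countable_bInter_mem hT).mpr hs

/-- The set of points near which `S` is (everywhere locally) non-meager. -/
def bigD (S : Set α) : Set α := {x | ∀ V : Set α, IsOpen V → x ∈ V → ¬ IsMeagre (S ∩ V)}

lemma isClosed_bigD (S : Set α) : IsClosed (bigD S) := by
  rw [← isOpen_compl_iff, isOpen_iff_forall_mem_open]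
  intro x hx
  simp only [bigD, mem_compl_iff, mem_setOf_eq, not_forall, not_not] at hx
  obtain ⟨V, hV, hxV, hm⟩ := hx
  refine ⟨V, fun y hy => ?_, hV, hxV⟩
  simp only [bigD, mem_compl_iff, mem_setOf_eq, not_forall, not_not]
  exact ⟨V, hV, hy, hm⟩

lemma isMeagre_diff_bigD [SecondCountableTopology α] (S : Set α) : IsMeagre (S \ bigD S) := by
  obtain ⟨b, hbc, -, hb⟩ := exists_countable_basis α
  have hsub : S \ bigD S ⊆ ⋃ t ∈ {t ∈ b | IsMeagre (S ∩ t)}, (S ∩ t) := by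
    rintro x ⟨hxS, hxD⟩
    simp only [bigD, mem_setOf_eq, not_forall, not_not] at hxD
    obtain ⟨V, hV, hxV, hm⟩ := hxD
    obtain ⟨t, htb, hxt, htV⟩ := hb.exists_subset_of_mem_open hxV hV
    exact mem_biUnion ⟨htb, hm.mono (inter_subset_inter_right _ htV)⟩ ⟨hxS, hxt⟩
  exact (my_isMeagre_biUnion (hbc.mono (sep_subset _ _)) (fun t ht => ht.2)).mono hsub

lemma baireMeasurableSet_hull [SecondCountableTopology α] (S : Set α) :
    BaireMeasurableSet (S ∪ bigD S) := by
  have h1 : BaireMeasurableSet (bigD S) :=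
    BaireMeasurableSet.of_compl ((isClosed_bigD S).isOpen_compl.baireMeasurableSet)
  have h2 : BaireMeasurableSet (S \ bigD S) := (isMeagre_diff_bigD S).baireMeasurableSet
  have : S ∪ bigD S = bigD S ∪ (S \ bigD S) := by
    rw [union_diff_self, union_comm]
  rw [this]
  exact h1.union h2

lemma isMeagre_of_baireMeasurableSet_subset_hull {S Z : Set α}
    (hZ : BaireMeasurableSet Z) (hsub : Z ⊆ (S ∪ bigD S) \ S) : IsMeagre Z := by
  by_contra hnm
  obtain ⟨U, hU, hZU⟩ := hZ.residualEq_isOpen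
  rw [eventuallyEq_set] at hZU
  have hW : IsMeagre {x | ¬(x ∈ Z ↔ x ∈ U)} := by
    rw [IsMeagre, compl_setOf]
    simp only [not_not]
    exact hZU
  have hZU' : (Z ∩ U).Nonempty := by
    rcases (Z ∩ U).eq_empty_or_nonempty with h | h
    · exact absurd (hW.mono (fun x hx => by
        simp only [mem_setOf_eq]
        intro hiff
        exact (eq_empty_iff_forall_notMem.1 h x) ⟨hx, hiff.1 hx⟩)) hnm
    · exact h
  obtain ⟨x, hxZ, hxU⟩ := hZU'
  have hxD : x ∈ bigD S := by
    rcases (hsub hxZ).1 with h | h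
    · exact absurd h (hsub hxZ).2
    · exact h
  refine hxD U hU hxU (hW.mono fun y ⟨hyS, hyU⟩ => ?_)
  simp only [mem_setOf_eq]
  intro hiff
  exact (hsub (hiff.2 hyU)).2 hyS

end Hulls

section Suslin
variable {α : Type*} [TopologicalSpace α] [PolishSpace α]

/-- The image under `f` of the set of sequences whose initial segment is `s`. -/
def cylSet (f : (ℕ → ℕ) → α) (s : List ℕ) : Set α := f '' {x | res x s.length = s}

/-- The hull of `cylSet f s`, inside the closure. -/
def cylHull (f : (ℕ → ℕ) → α) (s : List ℕ) : Set α :=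
  (cylSet f s ∪ bigD (cylSet f s)) ∩ closure (cylSet f s)

/-- Intersection of hulls along all initial segments. -/
def cylHulls (f : (ℕ → ℕ) → α) : List ℕ → Set α
  | [] => cylHull f []
  | (n :: s) => cylHull f (n :: s) ∩ cylHulls f s

lemma cylSet_cons_subset (f : (ℕ → ℕ) → α) (n : ℕ) (s : List ℕ) :
    cylSet f (n :: s) ⊆ cylSet f s := by
  apply image_mono
  intro x hx
  simp only [mem_setOf_eq, List.length_cons, res_succ] at hx ⊢
  exact (List.cons.injEq _ _ _ _ ▸ hx).2

lemma cylSet_eq_iUnion (f : (ℕ → ℕ) → α) (s : List ℕ) :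
    cylSet f s = ⋃ n, cylSet f (n :: s) := by
  apply Subset.antisymm
  · rintro y ⟨x, hx, rfl⟩
    refine mem_iUnion.2 ⟨x s.length, ⟨x, ?_, rfl⟩⟩
    simp only [mem_setOf_eq, List.length_cons, res_succ]
    rw [hx]
  · exact iUnion_subset fun n => cylSet_cons_subset f n s

lemma subset_cylHull (f : (ℕ → ℕ) → α) (s : List ℕ) : cylSet f s ⊆ cylHull f s :=
  fun x hx => ⟨Or.inl hx, subset_closure hx⟩

lemma subset_cylHulls (f : (ℕ → ℕ) → α) : ∀ s : List ℕ, cylSet f s ⊆ cylHulls f s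
  | [] => subset_cylHull f []
  | (n :: s) => fun x hx => ⟨subset_cylHull f _ hx,
      subset_cylHulls f s (cylSet_cons_subset f n s hx)⟩

lemma cylHulls_subset (f : (ℕ → ℕ) → α) : ∀ s : List ℕ, cylHulls f s ⊆ cylHull f s
  | [] => Subset.rfl
  | (_ :: _) => inter_subset_left

lemma baireMeasurableSet_cylHulls (f : (ℕ → ℕ) → α) :
    ∀ s : List ℕ, BaireMeasurableSet (cylHulls f s)
  | [] => (baireMeasurableSet_hull _).inter
      (BaireMeasurableSet.of_compl isClosed_closure.isOpen_compl.baireMeasurableSet)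
  | (n :: s) => ((baireMeasurableSet_hull _).inter
      (BaireMeasurableSet.of_compl isClosed_closure.isOpen_compl.baireMeasurableSet)).inter
      (baireMeasurableSet_cylHulls f s)

lemma isMeagre_cylHulls_diff (f : (ℕ → ℕ) → α) (s : List ℕ) :
    IsMeagre (cylHulls f s \ ⋃ n, cylHulls f (n :: s)) := by
  apply isMeagre_of_baireMeasurableSet_subset_hull
    ((baireMeasurableSet_cylHulls f s).diff
      (BaireMeasurableSet.iUnion fun n => baireMeasurableSet_cylHulls f _))
  rintro x ⟨hx, hnx⟩
  constructor
  · rcases cylHulls_subset f s hx with ⟨h1, -⟩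
    exact h1
  · intro hxS
    rw [cylSet_eq_iUnion] at hxS
    obtain ⟨n, hn⟩ := mem_iUnion.1 hxS
    exact hnx (mem_iUnion.2 ⟨n, subset_cylHulls f _ hn⟩)

theorem MeasureTheory.AnalyticSet.baireMeasurableSet' {A : Set α}
    (hA : MeasureTheory.AnalyticSet A) : BaireMeasurableSet A := by
  rw [MeasureTheory.AnalyticSet] at hA
  rcases hA with h | ⟨f, fc, rfl⟩
  · exact h ▸ isOpen_empty.baireMeasurableSet
  set M : Set α := ⋃ s : List ℕ, (cylHulls f s \ ⋃ n, cylHulls f (n :: s)) with hM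
  have hMm : IsMeagre M := my_isMeagre_iUnion fun s => isMeagre_cylHulls_diff f s
  have hA0 : cylSet f [] = range f := by
    simp only [cylSet, List.length_nil]
    rw [show {x : ℕ → ℕ | res x 0 = []} = univ from eq_univ_of_forall fun x => rfl, image_univ]
  -- the key step: points of `cylHulls f []` outside of `M` are in the range
  have key : cylHulls f [] \ M ⊆ range f := by
    intro y hy
    have hstep : ∀ s : List ℕ, y ∈ cylHulls f s → ∃ n, y ∈ cylHulls f (n :: s) := by
      intro s hs
      by_contra h
      push_neg at h
      exact hy.2 (mem_iUnion.2 ⟨s, hs, by simpa using h⟩)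
    classical
    set F : List ℕ → ℕ := fun s => if h : ∃ n, y ∈ cylHulls f (n :: s) then h.choose else 0
      with hF
    set g : ℕ → List ℕ := fun k => Nat.rec [] (fun _ l => F l :: l) k with hg
    have hgs : ∀ k, g (k + 1) = F (g k) :: g k := fun k => rfl
    have hmem : ∀ k, y ∈ cylHulls f (g k) := by
      intro k
      induction k with
      | zero => exact hy.1
      | succ k ih =>
        rw [hgs]
        have hex : ∃ n, y ∈ cylHulls f (n :: g k) := hstep _ ih
        have hFe : F (g k) = hex.choose := by rw [hF]; simp only [hex, dif_pos]
        rw [hFe]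
        exact hex.choose_spec
    set x : ℕ → ℕ := fun k => F (g k) with hx
    have hres : ∀ k, res x k = g k := by
      intro k
      induction k with
      | zero => rfl
      | succ k ih => rw [res_succ, ih, hgs]
    have hycl : ∀ k, y ∈ closure (f '' PiNat.cylinder x k) := by
      intro k
      have h1 := (cylHulls_subset f (g k) (hmem k)).2
      have h2 : cylSet f (g k) = f '' PiNat.cylinder x k := by
        rw [PiNat.cylinder_eq_res, cylSet, ← hres k]
        congr 1
        ext z
        simp only [mem_setOf_eq, res_length]
      rwa [h2] at h1
    letI := upgradeIsCompletelyMetrizable α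
    have : y = f x := by
      by_contra hne
      have hd : 0 < dist y (f x) := dist_pos.2 hne
      have hmem2 : f ⁻¹' Metric.ball (f x) (dist y (f x) / 2) ∈ nhds x :=
        fc.continuousAt.preimage_mem_nhds (Metric.ball_mem_nhds _ (by positivity))
      obtain ⟨v, ⟨z, n, rfl⟩, hxv, hvsub⟩ :=
        (isTopologicalBasis_cylinders (fun _ : ℕ => ℕ)).mem_nhds_iff.1 hmem2
      have hcyl : PiNat.cylinder x n = PiNat.cylinder z n := mem_cylinder_iff_eq.1 hxv
      have : y ∈ closure (Metric.ball (f x) (dist y (f x) / 2)) := by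
        refine closure_mono ?_ (hycl n)
        rw [hcyl]
        exact (image_subset_iff.2 hvsub)
      have := Metric.closure_ball_subset_closedBall this
      rw [Metric.mem_closedBall] at this
      linarith
    exact ⟨x, this.symm⟩
  have h1 : range f ⊆ cylHulls f [] := hA0 ▸ subset_cylHulls f []
  have h2 : IsMeagre (cylHulls f [] \ range f) :=
    hMm.mono (fun y hy => by
      by_contra hyM
      exact hy.2 (key ⟨hy.1, hyM⟩))
  have : range f = cylHulls f [] \ (cylHulls f [] \ range f) := (diff_diff_cancel_left h1).symm
  rw [this]
  exact (baireMeasurableSet_cylHulls f []).diff h2.baireMeasurableSet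

end Suslin

/-- A `Gδ` subset of a Polish space is Polish. -/
theorem my_isGδ_polishSpace {α : Type*} [TopologicalSpace α] [PolishSpace α] {s : Set α}
    (hs : IsGδ s) : PolishSpace ↥s := by
  obtain ⟨U, hUo, rfl⟩ := isGδ_iff_eq_iInter_nat.1 hs
  haveI : ∀ n, PolishSpace ↥(U n) := fun n => (hUo n).polishSpace
  set e : ↥(⋂ n, U n) → (Π n : ℕ, ↥(U n)) :=
    fun x n => ⟨↑x, (mem_iInter.1 x.2 n)⟩ with he
  have hcont : Continuous e :=
    continuous_pi fun n => Continuous.subtype_mk continuous_subtype_val _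
  have hval : (fun y : Π n : ℕ, ↥(U n) => (y 0 : α)) ∘ e = Subtype.val := rfl
  have hind : Topology.IsInducing e := by
    apply Topology.IsInducing.of_comp hcont (by fun_prop)
      (g := fun y : Π n : ℕ, ↥(U n) => (y 0 : α))
    rw [hval]
    exact Topology.IsInducing.subtypeVal
  have hinj : Function.Injective e := by
    intro a b h
    exact Subtype.ext (congrArg (fun y => (y 0 : α)) h)
  have hrange : IsClosed (range e) := by
    have : range e = ⋂ n : ℕ, {y : Π n : ℕ, ↥(U n) | (y n : α) = (y 0 : α)} := by
      apply Subset.antisymm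
      · rintro _ ⟨x, rfl⟩
        exact mem_iInter.2 fun n => rfl
      · intro y hy
        have hx : (y 0 : α) ∈ ⋂ n, U n :=
          mem_iInter.2 fun n => (mem_iInter.1 hy n : (y n : α) = (y 0 : α)) ▸ (y n).2
        refine ⟨⟨(y 0 : α), hx⟩, ?_⟩
        ext n
        exact (mem_iInter.1 hy n).symm
    rw [this]
    exact isClosed_iInter fun n => isClosed_eq
      (continuous_subtype_val.comp (continuous_apply n))
      (continuous_subtype_val.comp (continuous_apply 0))
  exact (Topology.IsClosedEmbedding.mk ⟨hind, hinj⟩ hrange).polishSpace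

/-- Preimage of a meager set under a dense inducing map is meager. -/
lemma my_isMeagre_preimage {X Y : Type*} [TopologicalSpace X] [TopologicalSpace Y] {ι : X → Y}
    (hind : Topology.IsInducing ι) (hd : DenseRange ι) {N : Set Y} (hN : IsMeagre N) :
    IsMeagre (ι ⁻¹' N) := by
  rw [isMeagre_iff_countable_union_isNowhereDense] at hN ⊢
  obtain ⟨S, hS, hSc, hsub⟩ := hN
  refine ⟨(preimage ι) '' S, ?_, hSc.image _, ?_⟩
  · rintro _ ⟨u, hu, rfl⟩
    have h1 : closure (ι ⁻¹' u) ⊆ ι ⁻¹' closure u :=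
      hind.continuous.closure_preimage_subset u
    have h2 : interior (ι ⁻¹' closure u) = ∅ := by
      rw [eq_empty_iff_forall_notMem]
      intro x hx
      obtain ⟨O, hOsub, hOo, hxO⟩ := mem_interior.1 hx
      obtain ⟨O', hO'o, hO'e⟩ := hind.isOpen_iff.1 hOo
      have h3 : O' ∩ range ι ⊆ closure u := by
        rintro _ ⟨hz1, z, rfl⟩
        exact hOsub (show z ∈ O from hO'e ▸ (hz1 : z ∈ ι ⁻¹' O'))
      have h4 : O' ⊆ closure u := by
        calc O' ⊆ closure (O' ∩ range ι) := hd.open_subset_closure_inter hO'o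
        _ ⊆ closure (closure u) := closure_mono h3
        _ = closure u := closure_closure
      have h5 : O' ⊆ interior (closure u) := interior_maximal h4 hO'o
      rw [hS u hu] at h5
      exact h5 (by rw [← mem_preimage, hO'e]; exact hxO)
    refine eq_empty_of_subset_empty ?_
    rw [← h2]
    exact interior_mono h1
  · refine subset_trans (preimage_mono hsub) ?_
    rw [sUnion_eq_biUnion, sUnion_eq_biUnion, preimage_iUnion₂]
    exact iUnion₂_subset fun u hu => subset_iUnion₂ (s := fun v _ => v) (ι ⁻¹' u) ⟨u, hu, rfl⟩

/-- An analytic Baire subspace of a Polish space has a dense subset which is `Gδ` in the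
ambient Polish space (and hence is completely metrizable, i.e. Polish). -/
theorem analytic_baire_has_dense_Gdelta
    (P : Type*) [TopologicalSpace P] [PolishSpace P] (X : Set P)
    (hA : MeasureTheory.AnalyticSet X)
    (hBaire : BaireSpace ↥X) :
    ∃ G : Set P, G ⊆ X ∧ Dense {x : ↥X | ↑x ∈ G} ∧ IsGδ G ∧ PolishSpace ↥G := by
  classical
  rcases X.eq_empty_or_nonempty with rfl | hne
  · refine ⟨∅, Subset.rfl, ?_, IsGδ.empty, isClosed_empty.polishSpace⟩
    haveI : IsEmpty ↥(∅ : Set P) := by simp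
    exact fun x => this.elim x
  set Y := closure X with hY
  have hYc : IsClosed Y := isClosed_closure
  haveI : PolishSpace ↥Y := hYc.polishSpace
  haveI : BaireSpace ↥Y := by letI := upgradeIsCompletelyMetrizable ↥Y; infer_instance
  set X' : Set ↥Y := Subtype.val ⁻¹' X with hX'
  rw [MeasureTheory.AnalyticSet] at hA
  rcases hA with h | ⟨f, fc, hf⟩
  · exact absurd h hne.ne_empty
  have hf' : MeasureTheory.AnalyticSet X' := by
    set f' : (ℕ → ℕ) → ↥Y := fun z => ⟨f z, subset_closure (hf ▸ mem_range_self z)⟩ with hf'd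
    have hr : range f' = X' := by
      ext y
      constructor
      · rintro ⟨z, rfl⟩
        exact (hf ▸ mem_range_self z : f z ∈ X)
      · intro hy
        obtain ⟨z, hz⟩ := (show (y : P) ∈ range f from hf.symm ▸ hy)
        exact ⟨z, Subtype.ext hz⟩
    rw [MeasureTheory.AnalyticSet]
    exact Or.inr ⟨f', Continuous.subtype_mk fc _, hr⟩
  obtain ⟨U, hUo, hUe⟩ := hf'.baireMeasurableSet'.residualEq_isOpen
  rw [Filter.eventuallyEq_set] at hUe
  obtain ⟨t, htsub, htGδ, htd⟩ := mem_residual.1 hUe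
  have hXim : Subtype.val '' X' = X := by
    rw [hX', image_preimage_eq_inter_range, Subtype.range_coe]
    exact inter_eq_self_of_subset_left subset_closure
  have hX'd : Dense X' := by
    intro y
    rw [closure_subtype, hXim]
    exact y.2
  set ι : ↥X → ↥Y := fun x => ⟨↑x, subset_closure x.2⟩ with hι
  have hιc : Continuous ι := Continuous.subtype_mk continuous_subtype_val _
  have hιind : Topology.IsInducing ι :=
    Topology.IsInducing.of_comp hιc continuous_subtype_val Topology.IsInducing.subtypeVal
  have hιrange : range ι = X' := by
    ext y
    constructor
    · rintro ⟨x, rfl⟩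
      exact x.2
    · intro hy
      exact ⟨⟨↑y, hy⟩, Subtype.ext rfl⟩
  have hιdr : DenseRange ι := by rw [DenseRange, hιrange]; exact hX'd
  have hstepA : X' ⊆ closure U := by
    by_contra hns
    rw [not_subset] at hns
    obtain ⟨y, hyX', hyU⟩ := hns
    set Bad : Set ↥Y := X' ∩ (closure U)ᶜ with hBad
    have hBadm : IsMeagre Bad := by
      have hs : Bad ⊆ {z | ¬(z ∈ X' ↔ z ∈ U)} := by
        rintro z ⟨hz1, hz2⟩
        simp only [mem_setOf_eq]
        intro hiff
        exact hz2 (subset_closure (hiff.1 hz1))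
      refine IsMeagre.mono hs ?_
      rw [IsMeagre, compl_setOf]
      simp only [not_not]
      exact hUe
    have hpre : IsMeagre (ι ⁻¹' Bad) := my_isMeagre_preimage hιind hιdr hBadm
    have hpo : IsOpen (ι ⁻¹' Bad) := by
      have he : ι ⁻¹' Bad = ι ⁻¹' (closure U)ᶜ := by
        ext x
        have hx : ι x ∈ X' := x.2
        simp only [hBad, mem_preimage, mem_inter_iff, hx, true_and]
      rw [he]
      exact (isClosed_closure.isOpen_compl).preimage hιc
    have hpn : (ι ⁻¹' Bad).Nonempty := by
      refine ⟨⟨↑y, hyX'⟩, ?_⟩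
      have he : ι ⟨↑y, hyX'⟩ = y := Subtype.ext rfl
      rw [mem_preimage, he]
      exact ⟨hyX', hyU⟩
    have hdc : Dense (ι ⁻¹' Bad)ᶜ := dense_of_mem_residual hpre
    obtain ⟨x, hx1, hx2⟩ := hdc.inter_open_nonempty _ hpo hpn
    exact hx2 hx1
  set G' : Set ↥Y := U ∩ t with hG'
  have hG'X' : G' ⊆ X' := fun z hz => (htsub hz.2).2 hz.1
  have hclG' : X' ⊆ closure G' := fun z hz =>
    closure_minimal (htd.open_subset_closure_inter hUo) isClosed_closure (hstepA hz)
  obtain ⟨Os, hOso, hOs⟩ := isGδ_iff_eq_iInter_nat.1 (hUo.isGδ.inter htGδ)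
  choose O' hO'o hO'e using fun n => isOpen_induced_iff.1 (hOso n)
  have himeq : Subtype.val '' G' = Y ∩ ⋂ n, O' n := by
    ext p
    constructor
    · rintro ⟨z, hz, rfl⟩
      refine ⟨z.2, mem_iInter.2 fun n => ?_⟩
      have hzn : z ∈ Os n := mem_iInter.1 (hOs ▸ (hz : z ∈ U ∩ t)) n
      rw [← hO'e n] at hzn
      exact hzn
    · rintro ⟨hpY, hpO⟩
      refine ⟨⟨p, hpY⟩, ?_, rfl⟩
      show (⟨p, hpY⟩ : ↥Y) ∈ U ∩ t
      rw [hOs]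
      exact mem_iInter.2 fun n => by rw [← hO'e n]; exact mem_preimage.2 (mem_iInter.1 hpO n)
  have hGδ : IsGδ (Subtype.val '' G') := by
    letI := upgradeIsCompletelyMetrizable P
    rw [himeq]
    exact (hYc.isGδ).inter (IsGδ.iInter fun n => (hO'o n).isGδ)
  refine ⟨Subtype.val '' G', ?_, ?_, hGδ, my_isGδ_polishSpace hGδ⟩
  · rintro _ ⟨z, hz, rfl⟩
    exact hG'X' hz
  · intro x
    have hrw : {x : ↥X | ↑x ∈ Subtype.val '' G'} = Subtype.val ⁻¹' (Subtype.val '' G') := rfl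
    rw [hrw, closure_subtype]
    have hx' : (⟨↑x, subset_closure x.2⟩ : ↥Y) ∈ closure G' := hclG' x.2
    rw [closure_subtype] at hx'
    have him : Subtype.val '' (Subtype.val ⁻¹' (Subtype.val '' G') : Set ↥X)
        = Subtype.val '' G' := by
      rw [image_preimage_eq_inter_range, Subtype.range_coe]
      exact inter_eq_self_of_subset_left (fun p hp => by
        rcases hp with ⟨z, hz, rfl⟩
        exact hG'X' hz)
    rw [him]
    exact hx'
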